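/- For any set X, the operation □ on Bin(X) is associative: for all binary operations *, • and ∘ on X, ((X,*) □ (X,•)) □ (X,∘) = (X,*) □ ((X,•) □ (X,∘)), i.e., for all x, y in X the operation obtained by composing in either order agrees. -/
import Mathlib


/-- The product of two binary operations on `X`:
`x □ y := (x * y) • (y * x)` where `f` plays the role of `*` and `g` of `•`. -/
def box {X : Type*} (f g : X → X → X) : X → X → X :=
  fun x y => g (f x y) (f y x)

/-- The operation `□` on `Bin(X)` is associative. -/
theorem box_assoc {X : Type*} (f g h : X → X → X) :
    ∀ x y : X, box (box f g) h x y = box f (box g h) x y := by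
  intro x y
  rfl
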